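/- Let n ≥ 1 and let p ∈ ℂ[x₁,…,xₙ] be a nonconstant polynomial with integer coefficients whose zero set V(p) is allowable. Then there exist a nonzero integer c and a finite list of linear forms ℓ₁, …, ℓ_r, each equal to some x_i, x_i + x_j, or x_i − x_j, such that p = c · ℓ₁ ⋯ ℓ_r. -/

import Mathlib

/-- An allowable hyperplane in `ℂⁿ`: one of `{x_i = 0}`, `{x_i + x_j = 0}`, `{x_i - x_j = 0}`. -/
def IsAllowableHyperplane (n : ℕ) (H : Set (Fin n → ℂ)) : Prop :=
  (∃ i : Fin n, H = {x | x i = 0}) ∨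
  (∃ i j : Fin n, i ≠ j ∧ H = {x | x i + x j = 0}) ∨
  (∃ i j : Fin n, i ≠ j ∧ H = {x | x i - x j = 0})

/-- An allowable set: a finite union of finite intersections of allowable hyperplanes. -/
def IsAllowable (n : ℕ) (A : Set (Fin n → ℂ)) : Prop :=
  ∃ (k : ℕ) (m : Fin k → ℕ) (H : (i : Fin k) → Fin (m i) → Set (Fin n → ℂ)),
    (∀ i j, IsAllowableHyperplane n (H i j)) ∧ A = ⋃ i, ⋂ j, H i j

section Aux

open MvPolynomial

/-- An allowable linear form. -/
def AllowForm (n : ℕ) (ℓ : MvPolynomial (Fin n) ℂ) : Prop :=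
  (∃ i, ℓ = X i) ∨
  (∃ i j, i ≠ j ∧ ℓ = X i + X j) ∨
  (∃ i j, i ≠ j ∧ ℓ = X i - X j)

lemma prime_X_cplx (m : ℕ) (i : Fin (m + 1)) :
    Prime (X i : MvPolynomial (Fin (m + 1)) ℂ) := by
  let e := (renameEquiv ℂ (Equiv.swap i 0)).trans (finSuccEquiv ℂ m)
  have he : e (X i) = Polynomial.X := by
    simp [e, renameEquiv_apply, rename_X, Equiv.swap_apply_left, finSuccEquiv_X_zero]
  have := (MulEquiv.prime_iff (p := (X i : MvPolynomial (Fin (m+1)) ℂ)) e.toRingEquiv.toMulEquiv).symm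
  rw [this]
  show Prime (e (X i))
  rw [he]
  exact Polynomial.prime_X

lemma prime_shear (m : ℕ) (i j : Fin (m + 1)) (hij : i ≠ j) (ε : ℂ) :
    Prime ((X i + C ε * X j : MvPolynomial (Fin (m + 1)) ℂ)) := by
  let A : MvPolynomial (Fin (m+1)) ℂ →ₐ[ℂ] MvPolynomial (Fin (m+1)) ℂ :=
    aeval (fun k => if k = i then X i + C ε * X j else X k)
  let B : MvPolynomial (Fin (m+1)) ℂ →ₐ[ℂ] MvPolynomial (Fin (m+1)) ℂ :=
    aeval (fun k => if k = i then X i - C ε * X j else X k)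
  have hAB : A.comp B = AlgHom.id ℂ _ := by
    apply algHom_ext
    intro k
    rcases eq_or_ne k i with rfl | hk
    · simp [A, B, aeval_X, if_neg (Ne.symm hij)]
    · simp [A, B, aeval_X, if_neg hk]
  have hBA : B.comp A = AlgHom.id ℂ _ := by
    apply algHom_ext
    intro k
    rcases eq_or_ne k i with rfl | hk
    · simp [A, B, aeval_X, if_neg (Ne.symm hij)]
    · simp [A, B, aeval_X, if_neg hk]
  let e : MvPolynomial (Fin (m+1)) ℂ ≃ₐ[ℂ] MvPolynomial (Fin (m+1)) ℂ :=
    AlgEquiv.ofAlgHom A B hAB hBA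
  have he : e (X i) = X i + C ε * X j := by
    simp [e, A, AlgEquiv.ofAlgHom, aeval_X]
  have := (MulEquiv.prime_iff (p := (X i : MvPolynomial (Fin (m+1)) ℂ)) e.toRingEquiv.toMulEquiv).symm
  have h2 : e.toRingEquiv.toMulEquiv (X i) = X i + C ε * X j := he
  rw [h2] at this
  exact this.mp (prime_X_cplx m i)

lemma AllowForm.prime {m : ℕ} {ℓ : MvPolynomial (Fin (m + 1)) ℂ}
    (h : AllowForm (m + 1) ℓ) : Prime ℓ := by
  rcases h with ⟨i, rfl⟩ | ⟨i, j, hij, rfl⟩ | ⟨i, j, hij, rfl⟩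
  · exact prime_X_cplx m i
  · have := prime_shear m i j hij 1
    simpa using this
  · have := prime_shear m i j hij (-1)
    simp only [map_neg, map_one, neg_one_mul] at this
    rwa [← sub_eq_add_neg] at this

lemma unit_is_C : ∀ (s : ℕ) (w : MvPolynomial (Fin s) ℂ), IsUnit w →
    ∃ a : ℂ, a ≠ 0 ∧ w = C a := by
  intro s
  induction s with
  | zero =>
    intro w hw
    obtain ⟨a, rfl⟩ := C_surjective (Fin 0) w
    refine ⟨a, ?_, rfl⟩
    rintro rfl
    simp only [map_zero] at hw
    exact hw.ne_zero rfl
  | succ s ih =>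
    intro w hw
    let e := finSuccEquiv ℂ s
    have hw' : IsUnit (e w) := hw.map e
    obtain ⟨r, hr, hCr⟩ := Polynomial.isUnit_iff.mp hw'
    obtain ⟨a, ha, rfl⟩ := ih r hr
    refine ⟨a, ha, ?_⟩
    apply e.injective
    rw [hCr.symm]
    show Polynomial.C (C a) = e (C a)
    have : e (C a) = algebraMap ℂ _ a := e.commutes a
    rw [this]
    rfl

lemma hyperplane_form {n : ℕ} {H : Set (Fin n → ℂ)} (h : IsAllowableHyperplane n H) :
    ∃ ℓ : MvPolynomial (Fin n) ℂ, AllowForm n ℓ ∧ ∀ x, x ∈ H ↔ eval x ℓ = 0 := by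
  rcases h with ⟨i, rfl⟩ | ⟨i, j, hij, rfl⟩ | ⟨i, j, hij, rfl⟩
  · exact ⟨X i, Or.inl ⟨i, rfl⟩, fun x => by simp [Set.mem_setOf_eq]⟩
  · exact ⟨X i + X j, Or.inr (Or.inl ⟨i, j, hij, rfl⟩), fun x => by simp [Set.mem_setOf_eq]⟩
  · exact ⟨X i - X j, Or.inr (Or.inr ⟨i, j, hij, rfl⟩), fun x => by simp [Set.mem_setOf_eq]⟩

lemma multiset_decomp {n : ℕ} :
    ∀ S : Multiset (MvPolynomial (Fin n) ℂ),
    (∀ g ∈ S, ∃ a : ℂ, a ≠ 0 ∧ ∃ ℓ, AllowForm n ℓ ∧ g = C a * ℓ) →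
    ∃ a : ℂ, a ≠ 0 ∧ ∃ (r : ℕ) (L : Fin r → MvPolynomial (Fin n) ℂ),
      (∀ t, AllowForm n (L t)) ∧ S.prod = C a * ∏ t, L t := by
  intro S
  induction S using Multiset.induction_on with
  | empty =>
    intro _
    exact ⟨1, one_ne_zero, 0, Fin.elim0, fun t => t.elim0, by simp⟩
  | cons g S ih =>
    intro hS
    obtain ⟨a₀, ha₀, ℓ₀, hℓ₀, rfl⟩ := hS g (Multiset.mem_cons_self g S)
    obtain ⟨a, ha, r, L, hL, hprod⟩ := ih (fun g' hg' => hS g' (Multiset.mem_cons_of_mem hg'))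
    refine ⟨a₀ * a, mul_ne_zero ha₀ ha, r + 1, Fin.cons ℓ₀ L, ?_, ?_⟩
    · intro t
      refine Fin.cases ?_ ?_ t
      · simpa using hℓ₀
      · intro t'; simpa using hL t'
    · rw [Multiset.prod_cons, hprod, Fin.prod_cons, map_mul]
      ring

lemma degX {a b : ℕ} (h : a < b) :
    ((Polynomial.X : Polynomial ℂ) ^ a).degree < ((Polynomial.X : Polynomial ℂ) ^ b).degree := by
  rw [Polynomial.degree_X_pow, Polynomial.degree_X_pow]
  exact_mod_cast h

lemma lead_add {a b : ℕ} (hab : a ≠ b) :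
    ((Polynomial.X : Polynomial ℂ) ^ a + Polynomial.X ^ b).leadingCoeff = 1 := by
  rcases lt_or_gt_of_ne hab with h | h
  · rw [Polynomial.leadingCoeff_add_of_degree_lt (degX h)]
    exact (Polynomial.monic_X_pow b).leadingCoeff
  · rw [Polynomial.leadingCoeff_add_of_degree_lt' (degX h)]
    exact (Polynomial.monic_X_pow a).leadingCoeff

lemma lead_sub {a b : ℕ} (hab : a ≠ b) :
    ((Polynomial.X : Polynomial ℂ) ^ a - Polynomial.X ^ b).leadingCoeff = 1 ∨
    ((Polynomial.X : Polynomial ℂ) ^ a - Polynomial.X ^ b).leadingCoeff = -1 := by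
  rcases lt_or_gt_of_ne hab with h | h
  · right
    rw [Polynomial.leadingCoeff_sub_of_degree_lt' (degX h),
      (Polynomial.monic_X_pow b).leadingCoeff]
  · left
    rw [Polynomial.leadingCoeff_sub_of_degree_lt (degX h)]
    exact (Polynomial.monic_X_pow a).leadingCoeff

lemma int_const {n : ℕ} (q0 : MvPolynomial (Fin n) ℤ) (c : ℂ) (hc : c ≠ 0)
    (r : ℕ) (L : Fin r → MvPolynomial (Fin n) ℂ) (hL : ∀ t, AllowForm n (L t))
    (hfac : MvPolynomial.map (Int.castRingHom ℂ) q0 = C c * ∏ t, L t) :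
    ∃ z : ℤ, z ≠ 0 ∧ (z : ℂ) = c := by
  classical
  set E : Fin n → ℕ := fun i => 2 ^ (i : ℕ) with hE
  have hEinj : Function.Injective E := fun i j h => by
    have : (i : ℕ) = (j : ℕ) := Nat.pow_right_injective (le_refl 2) h
    exact Fin.val_injective this
  let φ : MvPolynomial (Fin n) ℂ →ₐ[ℂ] Polynomial ℂ :=
    aeval (fun i => (Polynomial.X : Polynomial ℂ) ^ E i)
  let ψ : MvPolynomial (Fin n) ℤ →ₐ[ℤ] Polynomial ℤ :=
    aeval (fun i => (Polynomial.X : Polynomial ℤ) ^ E i)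
  have hnat : (Polynomial.mapRingHom (Int.castRingHom ℂ)).comp ψ.toRingHom
      = (φ.toRingHom : MvPolynomial (Fin n) ℂ →+* Polynomial ℂ).comp
          (MvPolynomial.map (Int.castRingHom ℂ)) := by
    apply MvPolynomial.ringHom_ext
    · intro z
      simp [φ, ψ, aeval_C, algebraMap_int_eq, Polynomial.map_intCast]
    · intro i
      simp [φ, ψ, aeval_X]
  have hmap : Polynomial.map (Int.castRingHom ℂ) (ψ q0) = φ (map (Int.castRingHom ℂ) q0) := by
    have := congrArg (fun f => f q0) (congrArg (fun (h : _ →+* _) => h.toFun) hnat)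
    simpa using this
  have hlead : ∀ t, (φ (L t)).leadingCoeff = 1 ∨ (φ (L t)).leadingCoeff = -1 := by
    intro t
    rcases hL t with ⟨i, h⟩ | ⟨i, j, hij, h⟩ | ⟨i, j, hij, h⟩
    · left; rw [h]; simp only [φ, aeval_X]
      exact (Polynomial.monic_X_pow (E i)).leadingCoeff
    · left; rw [h]; simp only [map_add, φ, aeval_X]
      exact lead_add (fun hEq => hij (hEinj hEq))
    · rw [h]; simp only [map_sub, φ, aeval_X]
      exact lead_sub (fun hEq => hij (hEinj hEq))
  have hprodlead : ∃ ε : ℂ, (ε = 1 ∨ ε = -1) ∧ (∏ t, (φ (L t)).leadingCoeff) = ε := by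
    refine ⟨∏ t, (φ (L t)).leadingCoeff, ?_, rfl⟩
    refine Finset.prod_induction _ (fun x => x = 1 ∨ x = -1) ?_ (Or.inl rfl) ?_
    · rintro a b (rfl | rfl) (rfl | rfl) <;> simp
    · intro t _; exact hlead t
  obtain ⟨ε, hε, hprod⟩ := hprodlead
  have hφp : φ (map (Int.castRingHom ℂ) q0) = Polynomial.C c * ∏ t, φ (L t) := by
    rw [hfac, map_mul, map_prod]
    congr 1
    simp [φ, aeval_C]
  have hlc : (φ (map (Int.castRingHom ℂ) q0)).leadingCoeff = c * ε := by
    rw [hφp, Polynomial.leadingCoeff_mul, Polynomial.leadingCoeff_C,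
      Polynomial.leadingCoeff_prod, hprod]
  set z : ℤ := (ψ q0).coeff ((φ (map (Int.castRingHom ℂ) q0)).natDegree) with hz
  have hzc : (z : ℂ) = c * ε := by
    rw [← hlc]
    rw [Polynomial.leadingCoeff, ← hmap, Polynomial.coeff_map]
    simp [hmap]
    exact hz
  rcases hε with rfl | rfl
  · exact ⟨z, by
      intro h; rw [h] at hzc; simp at hzc; exact hc hzc.symm, by rw [hzc, mul_one]⟩
  · refine ⟨-z, ?_, ?_⟩
    · intro h
      have : z = 0 := by omega
      rw [this] at hzc
      push_cast at hzc
      apply hc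
      have h2 : -c = 0 := by linear_combination -hzc
      exact neg_eq_zero.mp h2
    · push_cast
      rw [hzc]; ring

end Aux

open MvPolynomial

/-- A nonconstant complex polynomial with integer coefficients whose variety
is allowable is a nonzero integer times a product of linear forms `x_i`, `x_i + x_j`,
`x_i - x_j`. -/
theorem stmt_4 (n : ℕ) (hn : 1 ≤ n) (p : MvPolynomial (Fin n) ℂ)
    (hp : 0 < p.totalDegree)
    (hint : ∃ q : MvPolynomial (Fin n) ℤ, MvPolynomial.map (Int.castRingHom ℂ) q = p)
    (hV : IsAllowable n {x | MvPolynomial.eval x p = 0}) :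
    ∃ c : ℤ, c ≠ 0 ∧ ∃ (r : ℕ) (ℓ : Fin r → MvPolynomial (Fin n) ℂ),
      (∀ t,
        (∃ i, ℓ t = MvPolynomial.X i) ∨
        (∃ i j, i ≠ j ∧ ℓ t = MvPolynomial.X i + MvPolynomial.X j) ∨
        (∃ i j, i ≠ j ∧ ℓ t = MvPolynomial.X i - MvPolynomial.X j)) ∧
      p = MvPolynomial.C (c : ℂ) * ∏ t, ℓ t := by
  obtain ⟨m, rfl⟩ : ∃ m, n = m + 1 := ⟨n - 1, (Nat.succ_pred_eq_of_pos hn).symm⟩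
  obtain ⟨q0, hq0⟩ := hint
  have hp0 : p ≠ 0 := by rintro rfl; simp at hp
  obtain ⟨k, mm, H, hH, hA⟩ := hV
  have hmpos : ∀ i, 0 < mm i := by
    by_contra hcon
    push_neg at hcon
    obtain ⟨i, hi⟩ := hcon
    have hie : IsEmpty (Fin (mm i)) := by
      rw [Nat.le_zero.mp hi]; infer_instance
    have huniv : (⋂ j, H i j) = Set.univ := @Set.iInter_of_empty _ _ hie _
    have hall : ∀ x : Fin (m+1) → ℂ, eval x p = 0 := by
      intro x
      have hx : x ∈ {x | eval x p = 0} := by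
        rw [hA]
        exact Set.mem_iUnion.mpr ⟨i, by rw [huniv]; trivial⟩
      exact hx
    apply hp0
    apply MvPolynomial.funext
    intro x
    simp [hall x]
  choose ℓf hℓf hHf using fun i => hyperplane_form (hH i ⟨0, hmpos i⟩)
  have hPmem : (∏ i, ℓf i) ∈ vanishingIdeal ℂ (zeroLocus ℂ (Ideal.span {p})) := by
    rw [mem_vanishingIdeal_iff]
    intro x hx
    have hxp : eval x p = 0 := mem_zeroLocus_iff.mp hx p (Ideal.mem_span_singleton_self p)
    have hxu : x ∈ ⋃ i, ⋂ j, H i j := by rw [← hA]; exact hxp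
    obtain ⟨i, hi⟩ := Set.mem_iUnion.mp hxu
    have hmem := Set.mem_iInter.mp hi ⟨0, hmpos i⟩
    have hz : eval x (ℓf i) = 0 := (hHf i x).mp hmem
    rw [map_prod]
    exact Finset.prod_eq_zero (Finset.mem_univ i) hz
  rw [vanishingIdeal_zeroLocus_eq_radical] at hPmem
  obtain ⟨N, hN⟩ := hPmem
  have hdvd : p ∣ (∏ i, ℓf i) ^ N := Ideal.mem_span_singleton.mp hN
  have hfact : ∀ g ∈ UniqueFactorizationMonoid.factors p,
      ∃ a : ℂ, a ≠ 0 ∧ ∃ ℓ, AllowForm (m+1) ℓ ∧ g = C a * ℓ := by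
    intro g hg
    have hgprime := UniqueFactorizationMonoid.prime_of_factor g hg
    have hgdvd : g ∣ p :=
      (Multiset.dvd_prod hg).trans (UniqueFactorizationMonoid.factors_prod hp0).dvd
    have hgPN : g ∣ (∏ i, ℓf i) ^ N := hgdvd.trans hdvd
    have hgP : g ∣ ∏ i, ℓf i := hgprime.dvd_of_dvd_pow hgPN
    obtain ⟨i, -, hgi⟩ := hgprime.exists_mem_finset_dvd hgP
    have hassoc : Associated g (ℓf i) :=
      hgprime.irreducible.associated_of_dvd (hℓf i).prime.irreducible hgi
    obtain ⟨u, hu⟩ := hassoc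
    obtain ⟨a, ha, hCa⟩ := unit_is_C _ (↑u⁻¹ : MvPolynomial (Fin (m+1)) ℂ) (Units.isUnit _)
    refine ⟨a, ha, ℓf i, hℓf i, ?_⟩
    have hg2 : g = ℓf i * ↑u⁻¹ := by
      rw [← hu, mul_assoc]
      simp
    rw [hg2, hCa]
    ring
  obtain ⟨a, ha, r, L, hLform, hSprod⟩ := multiset_decomp _ hfact
  obtain ⟨u, hu⟩ := UniqueFactorizationMonoid.factors_prod hp0
  obtain ⟨d, hd, hCd⟩ := unit_is_C _ (↑u : MvPolynomial (Fin (m+1)) ℂ) u.isUnit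
  have hpfac : p = C (a * d) * ∏ t, L t := by
    rw [← hu, hSprod, hCd, map_mul]
    ring
  obtain ⟨z, hz0, hzc⟩ := int_const q0 (a * d) (mul_ne_zero ha hd) r L hLform
    (by rw [hq0, hpfac])
  exact ⟨z, hz0, r, L, hLform, by rw [hpfac, hzc]⟩
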